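/- The wedge of two discs minus the wedge point is disconnected: if W = (D² ⊔ D²)/(center ∼ center) and p is the identified center, then W ∖ {p} has exactly two connected components, whereas for any point q in the open disc, D² ∖ {q} restricted to a small punctured disc neighborhood is connected. -/

import Mathlib

open Metric

/-- The closed unit disc in the plane. -/
def Disc : Set (EuclideanSpace ℝ (Fin 2)) := closedBall 0 1

/-- The center of the disc. -/
noncomputable def discCenter : Disc := ⟨0, Metric.mem_closedBall_self zero_le_one⟩

/-- The identification of the two centers of `D² ⊔ D²`. -/
noncomputable def wedgeRel : (Disc ⊕ Disc) → (Disc ⊕ Disc) → Prop :=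
  fun a b => a = Sum.inl discCenter ∧ b = Sum.inr discCenter

/-- The wedge of two closed discs at their centers. -/
noncomputable def Wedge : Type := Quot wedgeRel

noncomputable instance : TopologicalSpace Wedge := instTopologicalSpaceQuot

/-- The identified center point of the wedge. -/
noncomputable def wedgePoint : Wedge := Quot.mk wedgeRel (Sum.inl discCenter)

open Set

local notation "EE" => EuclideanSpace ℝ (Fin 2)

lemma one_lt_rank_EE : 1 < Module.rank ℝ (EuclideanSpace ℝ (Fin 2)) := by
  rw [← Module.finrank_eq_rank, finrank_euclideanSpace_fin]
  exact_mod_cast one_lt_two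

lemma isConnected_norm_mem {q : EE} {s : Set ℝ} (hs : IsConnected s)
    (hpos : ∀ r ∈ s, 0 < r) : IsConnected {x : EE | ‖x - q‖ ∈ s} := by
  have himg : (fun p : ℝ × EE => q + p.1 • p.2) '' (s ×ˢ sphere (0:EE) 1)
      = {x : EE | ‖x - q‖ ∈ s} := by
    ext x
    constructor
    · rintro ⟨⟨r, v⟩, ⟨hr, hv⟩, rfl⟩
      rw [mem_sphere_zero_iff_norm] at hv
      simp only [mem_setOf_eq, add_sub_cancel_left, norm_smul, hv, mul_one]
      simpa [abs_of_pos (hpos r hr)] using hr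
    · intro hx
      have h0 : ‖x - q‖ ≠ 0 := ne_of_gt (hpos _ hx)
      refine ⟨(‖x - q‖, ‖x - q‖⁻¹ • (x - q)), ⟨hx, ?_⟩, ?_⟩
      · rw [mem_sphere_zero_iff_norm, norm_smul, norm_inv, norm_norm,
          inv_mul_cancel₀ h0]
      · simp [smul_smul, mul_inv_cancel₀ h0]
  rw [← himg]
  exact (hs.prod (isConnected_sphere one_lt_rank_EE 0 zero_le_one)).image _
    (continuous_const.add (continuous_fst.smul continuous_snd)).continuousOn

lemma isConnected_punctured_ball (q : EE) {δ : ℝ} (hδ : 0 < δ) :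
    IsConnected ((ball q δ \ {q}) : Set EE) := by
  have : (ball q δ \ {q} : Set EE) = {x : EE | ‖x - q‖ ∈ Ioo 0 δ} := by
    ext x
    simp [mem_ball, dist_eq_norm, mem_Ioo, and_comm, norm_pos_iff, sub_ne_zero]
  rw [this]
  exact isConnected_norm_mem (isConnected_Ioo hδ) (fun r hr => hr.1)

lemma isConnected_punctured_disc :
    IsConnected ((closedBall (0:EE) 1 \ {0}) : Set EE) := by
  have : (closedBall (0:EE) 1 \ {0} : Set EE) = {x : EE | ‖x - 0‖ ∈ Ioc 0 1} := by
    ext x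
    simp [mem_closedBall, dist_eq_norm, mem_Ioc, and_comm, norm_pos_iff, sub_ne_zero]
  rw [this]
  exact isConnected_norm_mem (isConnected_Ioc zero_lt_one) (fun r hr => hr.1)

open Classical in
noncomputable def wedgeNorm : Disc ⊕ Disc → Disc ⊕ Disc
  | Sum.inl d => Sum.inl d
  | Sum.inr d => if d = discCenter then Sum.inl discCenter else Sum.inr d

lemma wedgeNorm_eq {a b : Disc ⊕ Disc}
    (h : Quot.mk wedgeRel a = Quot.mk wedgeRel b) : wedgeNorm a = wedgeNorm b := by
  have := congrArg (Quot.lift wedgeNorm (fun a b hab => by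
    obtain ⟨ha, hb⟩ := hab; subst ha; subst hb; simp [wedgeNorm])) h
  simpa using this

lemma mk_inl_inj {d d' : Disc}
    (h : Quot.mk wedgeRel (Sum.inl d) = Quot.mk wedgeRel (Sum.inl d')) : d = d' := by
  have := wedgeNorm_eq h
  simpa [wedgeNorm] using this

lemma mk_inl_inr {d d' : Disc}
    (h : Quot.mk wedgeRel (Sum.inl d) = Quot.mk wedgeRel (Sum.inr d')) :
    d = discCenter ∧ d' = discCenter := by
  have H := wedgeNorm_eq h
  by_cases hc : d' = discCenter
  · simp only [wedgeNorm, if_pos hc] at H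
    exact ⟨Sum.inl.inj H, hc⟩
  · simp only [wedgeNorm, if_neg hc] at H
    exact absurd H (by simp)

lemma mk_inr_inj {d d' : Disc}
    (h : Quot.mk wedgeRel (Sum.inr d) = Quot.mk wedgeRel (Sum.inr d')) : d = d' := by
  have H := wedgeNorm_eq h
  by_cases h1 : d = discCenter <;> by_cases h2 : d' = discCenter
  · exact h1.trans h2.symm
  · simp only [wedgeNorm, if_pos h1, if_neg h2] at H; exact absurd H (by simp)
  · simp only [wedgeNorm, if_neg h1, if_pos h2] at H; exact absurd H (by simp)
  · simp only [wedgeNorm, if_neg h1, if_neg h2] at H; exact Sum.inr.inj H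

lemma mk_inr_center : Quot.mk wedgeRel (Sum.inr discCenter) = wedgePoint :=
  (Quot.sound ⟨rfl, rfl⟩).symm

/-- The two halves of the punctured wedge, as sets in `Wedge`. -/
noncomputable def setA : Set Wedge :=
  Quot.mk wedgeRel '' (Sum.inl '' {d : Disc | d ≠ discCenter})
noncomputable def setB : Set Wedge :=
  Quot.mk wedgeRel '' (Sum.inr '' {d : Disc | d ≠ discCenter})

lemma preimage_setA :
    Quot.mk wedgeRel ⁻¹' setA = Sum.inl '' {d : Disc | d ≠ discCenter} := by
  ext x
  constructor
  · rintro ⟨y, ⟨d, hd, rfl⟩, hy⟩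
    cases x with
    | inl d' =>
      have hdd := mk_inl_inj hy
      exact ⟨d', hdd ▸ hd, rfl⟩
    | inr d' => exact absurd (mk_inl_inr hy).1 hd
  · rintro ⟨d, hd, rfl⟩
    exact ⟨Sum.inl d, ⟨d, hd, rfl⟩, rfl⟩

lemma preimage_setB :
    Quot.mk wedgeRel ⁻¹' setB = Sum.inr '' {d : Disc | d ≠ discCenter} := by
  ext x
  constructor
  · rintro ⟨y, ⟨d, hd, rfl⟩, hy⟩
    cases x with
    | inl d' => exact absurd (mk_inl_inr hy.symm).2 hd
    | inr d' =>
      have hdd := mk_inr_inj hy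
      exact ⟨d', hdd ▸ hd, rfl⟩
  · rintro ⟨d, hd, rfl⟩
    exact ⟨Sum.inr d, ⟨d, hd, rfl⟩, rfl⟩

lemma isOpen_setA : IsOpen setA := by
  have h : IsOpen (Quot.mk wedgeRel ⁻¹' setA) := by
    rw [preimage_setA]
    exact isOpenMap_inl _ isOpen_ne
  exact isQuotientMap_quot_mk.isOpen_preimage.mp h

lemma isOpen_setB : IsOpen setB := by
  have h : IsOpen (Quot.mk wedgeRel ⁻¹' setB) := by
    rw [preimage_setB]
    exact isOpenMap_inr _ isOpen_ne
  exact isQuotientMap_quot_mk.isOpen_preimage.mp h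

lemma wedgePoint_notMem_setA : wedgePoint ∉ setA := by
  rintro ⟨y, ⟨d, hd, rfl⟩, hy⟩
  exact hd (mk_inl_inj hy)

lemma wedgePoint_notMem_setB : wedgePoint ∉ setB := by
  rintro ⟨y, ⟨d, hd, rfl⟩, hy⟩
  exact hd (mk_inl_inr hy.symm).2

lemma setA_disjoint_setB : ∀ w, w ∈ setA → w ∈ setB → False := by
  rintro w ⟨_, ⟨d, hd, rfl⟩, rfl⟩ ⟨_, ⟨d', hd', rfl⟩, hy⟩
  exact hd (mk_inl_inr hy.symm).1

lemma mem_setA_or_setB {w : Wedge} (hw : w ≠ wedgePoint) : w ∈ setA ∨ w ∈ setB := by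
  induction w using Quot.ind with
  | _ x =>
    cases x with
    | inl d =>
      left
      exact ⟨Sum.inl d, ⟨d, fun hc => hw (by rw [hc]; rfl), rfl⟩, rfl⟩
    | inr d =>
      right
      refine ⟨Sum.inr d, ⟨d, fun hc => hw ?_, rfl⟩, rfl⟩
      rw [hc]; exact mk_inr_center

/-- a point of the disc distinct from the center -/
noncomputable def edgePt : Disc :=
  ⟨EuclideanSpace.single 0 (1:ℝ), by
    simp [Disc, mem_closedBall, dist_eq_norm, EuclideanSpace.norm_single]⟩

lemma edgePt_ne : edgePt ≠ discCenter := by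
  intro h
  have : EuclideanSpace.single (0 : Fin 2) (1:ℝ) = 0 := congrArg Subtype.val h
  have h1 := congrArg (fun x : EE => ‖x‖) this
  simp [EuclideanSpace.norm_single] at h1

lemma isConnected_puncturedDiscSet : IsConnected {d : Disc | d ≠ discCenter} := by
  have h1 : Subtype.val '' {d : Disc | d ≠ discCenter} = closedBall (0:EE) 1 \ {0} := by
    ext x
    constructor
    · rintro ⟨d, hd, rfl⟩
      exact ⟨d.2, fun hc => hd (Subtype.ext hc)⟩
    · rintro ⟨hx1, hx2⟩
      exact ⟨⟨x, hx1⟩, fun hc => hx2 (congrArg Subtype.val hc), rfl⟩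
  constructor
  · exact ⟨edgePt, edgePt_ne⟩
  · apply Topology.IsInducing.subtypeVal.isPreconnected_image.mp
    rw [h1]
    exact isConnected_punctured_disc.2

lemma isConnected_setA : IsConnected setA := by
  have : setA = (fun d : Disc => Quot.mk wedgeRel (Sum.inl d)) '' {d | d ≠ discCenter} := by
    exact image_image _ _ _
  rw [this]
  exact isConnected_puncturedDiscSet.image _
    (continuous_quot_mk.comp continuous_inl).continuousOn

lemma isConnected_setB : IsConnected setB := by
  have : setB = (fun d : Disc => Quot.mk wedgeRel (Sum.inr d)) '' {d | d ≠ discCenter} := by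
    exact image_image _ _ _
  rw [this]
  exact isConnected_puncturedDiscSet.image _
    (continuous_quot_mk.comp continuous_inr).continuousOn

lemma two_components :
    Nonempty (ConnectedComponents ({w : Wedge | w ≠ wedgePoint}) ≃ Fin 2) := by
  set X : Set Wedge := {w : Wedge | w ≠ wedgePoint} with hX
  have hsubA : setA ⊆ X := fun w hw hc => wedgePoint_notMem_setA (hc ▸ hw)
  have hsubB : setB ⊆ X := fun w hw hc => wedgePoint_notMem_setB (hc ▸ hw)
  set A' : Set X := Subtype.val ⁻¹' setA with hA'
  set B' : Set X := Subtype.val ⁻¹' setB with hB'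
  have himgA : Subtype.val '' A' = setA := by
    apply Set.Subset.antisymm
    · rintro _ ⟨⟨w, hw⟩, hmem, rfl⟩; exact hmem
    · intro w hw; exact ⟨⟨w, hsubA hw⟩, hw, rfl⟩
  have himgB : Subtype.val '' B' = setB := by
    apply Set.Subset.antisymm
    · rintro _ ⟨⟨w, hw⟩, hmem, rfl⟩; exact hmem
    · intro w hw; exact ⟨⟨w, hsubB hw⟩, hw, rfl⟩
  have hpreA : IsPreconnected A' := by
    apply Topology.IsInducing.subtypeVal.isPreconnected_image.mp
    rw [himgA]; exact isConnected_setA.2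
  have hpreB : IsPreconnected B' := by
    apply Topology.IsInducing.subtypeVal.isPreconnected_image.mp
    rw [himgB]; exact isConnected_setB.2
  have hopenA : IsOpen A' := isOpen_setA.preimage continuous_subtype_val
  have hopenB : IsOpen B' := isOpen_setB.preimage continuous_subtype_val
  have hunion : A' ∪ B' = univ := by
    ext ⟨w, hw⟩
    simpa [A', B'] using mem_setA_or_setB hw
  have hdisj : ∀ x : X, x ∈ A' → x ∈ B' → False := fun x hx1 hx2 =>
    setA_disjoint_setB x hx1 hx2
  have hcomplA : A'ᶜ = B' := by
    apply Set.Subset.antisymm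
    · intro x hx
      rcases (hunion ▸ mem_univ x : x ∈ A' ∪ B') with h | h
      · exact absurd h hx
      · exact h
    · intro x hx hxa; exact hdisj x hxa hx
  have hclopenA : IsClopen A' := ⟨by rw [← isOpen_compl_iff, hcomplA]; exact hopenB, hopenA⟩
  have hclopenB : IsClopen B' := by
    refine ⟨?_, hopenB⟩
    rw [← isOpen_compl_iff, ← hcomplA, compl_compl]
    exact hopenA
  -- base points
  have ha₀ : (Quot.mk wedgeRel (Sum.inl edgePt)) ∈ setA := ⟨_, ⟨edgePt, edgePt_ne, rfl⟩, rfl⟩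
  have hb₀ : (Quot.mk wedgeRel (Sum.inr edgePt)) ∈ setB := ⟨_, ⟨edgePt, edgePt_ne, rfl⟩, rfl⟩
  set a₀ : X := ⟨_, hsubA ha₀⟩ with ha₀'
  set b₀ : X := ⟨_, hsubB hb₀⟩ with hb₀'
  have ha₀A : a₀ ∈ A' := ha₀
  have hb₀B : b₀ ∈ B' := hb₀
  have hcompA : ∀ x : X, x ∈ A' → connectedComponent x = A' := fun x hx =>
    Set.Subset.antisymm (hclopenA.connectedComponent_subset hx)
      (hpreA.subset_connectedComponent hx)
  have hcompB : ∀ x : X, x ∈ B' → connectedComponent x = B' := fun x hx =>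
    Set.Subset.antisymm (hclopenB.connectedComponent_subset hx)
      (hpreB.subset_connectedComponent hx)
  set f : Fin 2 → ConnectedComponents X :=
    ![ConnectedComponents.mk a₀, ConnectedComponents.mk b₀] with hf
  have hAB : A' ≠ B' := fun h => hdisj a₀ ha₀A (h ▸ ha₀A)
  have hne : (ConnectedComponents.mk a₀) ≠ ConnectedComponents.mk b₀ := by
    intro h
    exact hAB ((hcompA a₀ ha₀A).symm.trans
      ((ConnectedComponents.coe_eq_coe.mp h).trans (hcompB b₀ hb₀B)))
  have hinj : Function.Injective f := by
    intro i j hij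
    fin_cases i <;> fin_cases j <;>
      simp only [f, Fin.isValue, Matrix.cons_val_zero, Matrix.cons_val_one,
        Matrix.head_cons] at hij <;>
      first
        | rfl
        | exact absurd hij hne
        | exact absurd hij.symm hne
  have hsurj : Function.Surjective f := by
    intro c
    obtain ⟨x, rfl⟩ := ConnectedComponents.surjective_coe c
    rcases (hunion ▸ mem_univ x : x ∈ A' ∪ B') with h | h
    · refine ⟨0, ?_⟩
      simp only [f, Matrix.cons_val_zero]
      exact ConnectedComponents.coe_eq_coe.mpr ((hcompA a₀ ha₀A).trans (hcompA x h).symm)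
    · refine ⟨1, ?_⟩
      simp only [f, Matrix.cons_val_one, Matrix.head_cons]
      exact ConnectedComponents.coe_eq_coe.mpr ((hcompB b₀ hb₀B).trans (hcompB x h).symm)
  exact ⟨(Equiv.ofBijective f ⟨hinj, hsurj⟩).symm⟩

/-- Removing the wedge point from the wedge of two discs leaves exactly two
connected components, whereas for any point `q` of the open disc, small
punctured disc neighborhoods of `q` are connected. -/
theorem wedge_minus_point_two_components :
    Nonempty (ConnectedComponents ({w : Wedge | w ≠ wedgePoint}) ≃ Fin 2) ∧
    ∀ q ∈ ball (0 : EuclideanSpace ℝ (Fin 2)) 1, ∃ δ : ℝ, 0 < δ ∧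
      ∀ δ' : ℝ, 0 < δ' → δ' ≤ δ →
        IsConnected ((ball q δ' \ {q}) : Set (EuclideanSpace ℝ (Fin 2))) := by
  refine ⟨two_components, fun q _ => ⟨1, zero_lt_one, fun δ' hδ' _ => ?_⟩⟩
  exact isConnected_punctured_ball q hδ'
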